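/- arXiv:1806.05151 — 3 statements merged into one kernel-verified Lean document; each statement's English description precedes it below -/
import Mathlib

section
/- Let O ∈ ℝ^{d×d} be orthogonal, let Λ^A, Λ^B ∈ ℝ^{d×d} be diagonal with Λ^B having strictly positive diagonal, and set A = O Λ^A Oᵀ, B = O Λ^B Oᵀ, B^{-1/2} = O (Λ^B)^{-1/2} Oᵀ, and Λ = (Λ^B)^{-1/2} Λ^A (Λ^B)^{-1/2}. Let A', B' be independent, integrable random d×d matrices with E[A'] = A and E[B'] = B, and with E‖A'‖² and E‖B'‖² finite. Fix a deterministic vector W ∈ ℝ^d and define the random matrices Λ̂ = Oᵀ B' O and Λ̃ = Oᵀ B^{-1/2} A' B^{-1/2} O. Then E[(Λ^B − (Λ^B)^{1/2} Λ̂ (Λ^B)^{-1/2} W Wᵀ) Λ̃ W] = Λ^A W − (Wᵀ Λ W) Λ^B W. -/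
open Matrix MeasureTheory

instance (m n : Type*) : MeasurableSpace (Matrix m n ℝ) :=
  inferInstanceAs (MeasurableSpace (m → n → ℝ))

/-- Infinitesimal conditional expectation of the transformed SGHA
update: for independent integrable random matrices `A'`, `B'` with means `A`, `B` and
finite second moments, and a fixed vector `W`,
`E[(Λ^B − (Λ^B)^{1/2} Λ̂ (Λ^B)^{-1/2} W Wᵀ) Λ̃ W] = Λ^A W − (Wᵀ Λ W) Λ^B W`
(componentwise), where `Λ̂ = Oᵀ B' O`, `Λ̃ = Oᵀ B^{-1/2} A' B^{-1/2} O` and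
`Λ = (Λ^B)^{-1/2} Λ^A (Λ^B)^{-1/2}`. -/
theorem sgha_infinitesimal_mean
    (d : ℕ) (hd : 1 ≤ d)
    (O : Matrix (Fin d) (Fin d) ℝ) (hO : Oᵀ * O = 1)
    (lamA lamB : Fin d → ℝ) (hlamB : ∀ i, 0 < lamB i)
    (A B Binvhalf Λm : Matrix (Fin d) (Fin d) ℝ)
    (hA : A = O * diagonal lamA * Oᵀ)
    (hB : B = O * diagonal lamB * Oᵀ)
    (hBinvhalf : Binvhalf = O * diagonal (fun i => (Real.sqrt (lamB i))⁻¹) * Oᵀ)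
    (hΛm : Λm = diagonal (fun i => (Real.sqrt (lamB i))⁻¹) * diagonal lamA *
        diagonal (fun i => (Real.sqrt (lamB i))⁻¹))
    (Ω : Type*) [MeasurableSpace Ω] (P : Measure Ω) [IsProbabilityMeasure P]
    (A' B' : Ω → Matrix (Fin d) (Fin d) ℝ)
    (hmeasA : Measurable A') (hmeasB : Measurable B')
    (hindep : ProbabilityTheory.IndepFun A' B' P)
    (hintA : ∀ i j, Integrable (fun ω => A' ω i j) P)
    (hintB : ∀ i j, Integrable (fun ω => B' ω i j) P)
    (hmeanA : ∀ i j, ∫ ω, A' ω i j ∂P = A i j)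
    (hmeanB : ∀ i j, ∫ ω, B' ω i j ∂P = B i j)
    (hmomA : Integrable (fun ω => ∑ i, ∑ j, (A' ω i j) ^ 2) P)
    (hmomB : Integrable (fun ω => ∑ i, ∑ j, (B' ω i j) ^ 2) P)
    (W : Fin d → ℝ) :
    ∀ i, (∫ ω, (((diagonal lamB -
          diagonal (fun k => Real.sqrt (lamB k)) * (Oᵀ * B' ω * O) *
            diagonal (fun k => (Real.sqrt (lamB k))⁻¹) * vecMulVec W W) *
          (Oᵀ * Binvhalf * A' ω * Binvhalf * O)) *ᵥ W) i ∂P)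
      = (diagonal lamA *ᵥ W - (W ⬝ᵥ (Λm *ᵥ W)) • (diagonal lamB *ᵥ W)) i := by
  intro i
  have hO' : O * Oᵀ = 1 := mul_eq_one_comm.mp hO
  -- abbreviations for the diagonal square roots
  set S : Matrix (Fin d) (Fin d) ℝ := diagonal (fun k => Real.sqrt (lamB k)) with hSdef
  set Si : Matrix (Fin d) (Fin d) ℝ := diagonal (fun k => (Real.sqrt (lamB k))⁻¹) with hSidef
  -- pointwise structural identity
  have key : ∀ (Y Z : Matrix (Fin d) (Fin d) ℝ),
      (((diagonal lamB - S * Y * Si * vecMulVec W W) * Z) *ᵥ W) i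
      = lamB i * ((Z *ᵥ W) i) - (W ⬝ᵥ (Z *ᵥ W)) * (((S * Y * Si) *ᵥ W) i) := by
    intro Y Z
    rw [Matrix.sub_mul, Matrix.sub_mulVec]
    have h1 : ((diagonal lamB * Z) *ᵥ W) i = lamB i * ((Z *ᵥ W) i) := by
      rw [← mulVec_mulVec, mulVec_diagonal]
    have h2 : vecMulVec W W *ᵥ (Z *ᵥ W) = (W ⬝ᵥ (Z *ᵥ W)) • W := by
      funext k
      simp [vecMulVec, mulVec, dotProduct, Finset.mul_sum, mul_comm, mul_assoc, mul_left_comm]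
    have h3 : ((S * Y * Si * vecMulVec W W * Z) *ᵥ W) i
        = (W ⬝ᵥ (Z *ᵥ W)) * (((S * Y * Si) *ᵥ W) i) := by
      rw [← mulVec_mulVec, ← mulVec_mulVec, h2, mulVec_smul]
      simp [smul_eq_mul]
    rw [Pi.sub_apply, h1, h3]
  -- scalar expansion of the linear part
  have hlin : ∀ (Z : Matrix (Fin d) (Fin d) ℝ),
      lamB i * ((Z *ᵥ W) i) = ∑ j, (lamB i * W j) * Z i j := by
    intro Z
    simp [mulVec, dotProduct, Finset.mul_sum]
    exact Finset.sum_congr rfl fun j _ => by ring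
  -- scalar expansion of the bilinear part
  have hbil : ∀ (Y Z : Matrix (Fin d) (Fin d) ℝ),
      (W ⬝ᵥ (Z *ᵥ W)) * (((S * Y * Si) *ᵥ W) i)
      = ∑ k, ∑ j, ∑ a, ((W k * W j) * (Real.sqrt (lamB i) * ((Real.sqrt (lamB a))⁻¹ * W a)))
          * (Z k j * Y i a) := by
    intro Y Z
    have hv : ∀ x, (((S * Y * Si)) *ᵥ W) x
        = ∑ a, Real.sqrt (lamB x) * Y x a * (Real.sqrt (lamB a))⁻¹ * W a := by
      intro x
      simp only [hSdef, hSidef, mulVec, dotProduct, mul_diagonal, diagonal_mul]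
    rw [hv]
    simp only [dotProduct, mulVec]
    rw [Finset.sum_mul]
    refine Finset.sum_congr rfl fun k _ => ?_
    rw [Finset.mul_sum, ← Finset.sum_comm]
    refine Finset.sum_congr rfl fun a _ => ?_
    rw [Finset.mul_sum, Finset.sum_mul]
    refine Finset.sum_congr rfl fun j _ => ?_
    ring
  -- entry expansion of the conjugated matrices, for an arbitrary matrix argument
  have hZexp : ∀ (M : Matrix (Fin d) (Fin d) ℝ) k j,
      (Oᵀ * Binvhalf * M * Binvhalf * O) k j
      = ∑ s, ∑ r, (Oᵀ * Binvhalf) k r * M r s * ((Binvhalf * O) s j) := by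
    intro M k j
    rw [show Oᵀ * Binvhalf * M * Binvhalf * O = (Oᵀ * Binvhalf) * M * (Binvhalf * O) from by
      simp [Matrix.mul_assoc]]
    simp [mul_apply, Finset.sum_mul]
  have hYexp : ∀ (M : Matrix (Fin d) (Fin d) ℝ) k j,
      (Oᵀ * M * O) k j = ∑ s, ∑ r, Oᵀ k r * M r s * O s j := by
    intro M k j
    simp [mul_apply, Finset.sum_mul]
  -- measurability of entry maps
  have hmeasEntry : ∀ (r s : Fin d), Measurable (fun M : Matrix (Fin d) (Fin d) ℝ => M r s) :=
    fun r s => (measurable_pi_apply s).comp (measurable_pi_apply r)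
  -- the random entries
  have hZint : ∀ k j, Integrable (fun ω => (Oᵀ * Binvhalf * A' ω * Binvhalf * O) k j) P := by
    intro k j
    have : (fun ω => (Oᵀ * Binvhalf * A' ω * Binvhalf * O) k j)
        = fun ω => ∑ s, ∑ r, (Oᵀ * Binvhalf) k r * A' ω r s * ((Binvhalf * O) s j) :=
      funext fun ω => hZexp (A' ω) k j
    rw [this]
    exact integrable_finset_sum _ fun s _ => integrable_finset_sum _ fun r _ =>
      ((hintA r s).const_mul _).mul_const _
  have hYint : ∀ k j, Integrable (fun ω => (Oᵀ * B' ω * O) k j) P := by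
    intro k j
    have : (fun ω => (Oᵀ * B' ω * O) k j)
        = fun ω => ∑ s, ∑ r, Oᵀ k r * B' ω r s * O s j :=
      funext fun ω => hYexp (B' ω) k j
    rw [this]
    exact integrable_finset_sum _ fun s _ => integrable_finset_sum _ fun r _ =>
      ((hintB r s).const_mul _).mul_const _
  -- means of the random entries
  have hZmean : ∀ k j, ∫ ω, (Oᵀ * Binvhalf * A' ω * Binvhalf * O) k j ∂P
      = (Oᵀ * Binvhalf * A * Binvhalf * O) k j := by
    intro k j
    have h1 : (fun ω => (Oᵀ * Binvhalf * A' ω * Binvhalf * O) k j)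
        = fun ω => ∑ s, ∑ r, (Oᵀ * Binvhalf) k r * A' ω r s * ((Binvhalf * O) s j) :=
      funext fun ω => hZexp (A' ω) k j
    rw [h1, integral_finset_sum _ (fun s _ => integrable_finset_sum _ fun r _ =>
      ((hintA r s).const_mul _).mul_const _), hZexp A k j]
    refine Finset.sum_congr rfl fun s _ => ?_
    rw [integral_finset_sum _ (fun r _ => ((hintA r s).const_mul _).mul_const _)]
    refine Finset.sum_congr rfl fun r _ => ?_
    rw [integral_mul_const, integral_const_mul, hmeanA]
  have hYmean : ∀ k j, ∫ ω, (Oᵀ * B' ω * O) k j ∂P = (Oᵀ * B * O) k j := by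
    intro k j
    have h1 : (fun ω => (Oᵀ * B' ω * O) k j)
        = fun ω => ∑ s, ∑ r, Oᵀ k r * B' ω r s * O s j :=
      funext fun ω => hYexp (B' ω) k j
    rw [h1, integral_finset_sum _ (fun s _ => integrable_finset_sum _ fun r _ =>
      ((hintB r s).const_mul _).mul_const _), hYexp B k j]
    refine Finset.sum_congr rfl fun s _ => ?_
    rw [integral_finset_sum _ (fun r _ => ((hintB r s).const_mul _).mul_const _)]
    refine Finset.sum_congr rfl fun r _ => ?_
    rw [integral_mul_const, integral_const_mul, hmeanB]
  -- independence of entries of the two conjugated random matrices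
  have hindepE : ∀ k j a b, ProbabilityTheory.IndepFun
      (fun ω => (Oᵀ * Binvhalf * A' ω * Binvhalf * O) k j)
      (fun ω => (Oᵀ * B' ω * O) a b) P := by
    intro k j a b
    have hf : Measurable (fun M : Matrix (Fin d) (Fin d) ℝ =>
        (Oᵀ * Binvhalf * M * Binvhalf * O) k j) := by
      have : (fun M : Matrix (Fin d) (Fin d) ℝ => (Oᵀ * Binvhalf * M * Binvhalf * O) k j)
          = fun M => ∑ s, ∑ r, (Oᵀ * Binvhalf) k r * M r s * ((Binvhalf * O) s j) :=
        funext fun M => hZexp M k j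
      rw [this]
      exact Finset.measurable_sum _ fun s _ => Finset.measurable_sum _ fun r _ =>
        ((measurable_const.mul (hmeasEntry r s)).mul_const _)
    have hg : Measurable (fun M : Matrix (Fin d) (Fin d) ℝ => (Oᵀ * M * O) a b) := by
      have : (fun M : Matrix (Fin d) (Fin d) ℝ => (Oᵀ * M * O) a b)
          = fun M => ∑ s, ∑ r, Oᵀ a r * M r s * O s b :=
        funext fun M => hYexp M a b
      rw [this]
      exact Finset.measurable_sum _ fun s _ => Finset.measurable_sum _ fun r _ =>
        ((measurable_const.mul (hmeasEntry r s)).mul_const _)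
    exact hindep.comp hf hg
  -- product integrability and factorization of expectations
  have hintProd : ∀ k j a b, Integrable
      (fun ω => (Oᵀ * Binvhalf * A' ω * Binvhalf * O) k j * (Oᵀ * B' ω * O) a b) P :=
    fun k j a b => (hindepE k j a b).integrable_mul (hZint k j) (hYint a b)
  have hmeanProd : ∀ k j a b,
      ∫ ω, (Oᵀ * Binvhalf * A' ω * Binvhalf * O) k j * (Oᵀ * B' ω * O) a b ∂P
      = (Oᵀ * Binvhalf * A * Binvhalf * O) k j * (Oᵀ * B * O) a b := by
    intro k j a b
    have h := ProbabilityTheory.IndepFun.integral_fun_mul_eq_mul_integral (hindepE k j a b) (hZint k j).aestronglyMeasurable (hYint a b).aestronglyMeasurable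
    rw [← hZmean, ← hYmean]
    exact h
  -- rewrite the integrand using key and the scalar expansions
  have hinteg : (fun ω => (((diagonal lamB -
        S * (Oᵀ * B' ω * O) * Si * vecMulVec W W) *
        (Oᵀ * Binvhalf * A' ω * Binvhalf * O)) *ᵥ W) i)
      = fun ω =>
        (∑ j, (lamB i * W j) * (Oᵀ * Binvhalf * A' ω * Binvhalf * O) i j)
        - ∑ k, ∑ j, ∑ a, ((W k * W j) * (Real.sqrt (lamB i) * ((Real.sqrt (lamB a))⁻¹ * W a)))
            * ((Oᵀ * Binvhalf * A' ω * Binvhalf * O) k j * (Oᵀ * B' ω * O) i a) := by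
    funext ω
    rw [key, hlin, hbil]
  -- compute the integral
  rw [hinteg]
  have hint1 : Integrable (fun ω =>
      ∑ j, (lamB i * W j) * (Oᵀ * Binvhalf * A' ω * Binvhalf * O) i j) P :=
    integrable_finset_sum _ fun j _ => (hZint i j).const_mul _
  have hint2 : Integrable (fun ω =>
      ∑ k, ∑ j, ∑ a, ((W k * W j) * (Real.sqrt (lamB i) * ((Real.sqrt (lamB a))⁻¹ * W a)))
        * ((Oᵀ * Binvhalf * A' ω * Binvhalf * O) k j * (Oᵀ * B' ω * O) i a)) P :=
    integrable_finset_sum _ fun k _ => integrable_finset_sum _ fun j _ =>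
      integrable_finset_sum _ fun a _ => (hintProd k j i a).const_mul _
  rw [integral_sub hint1 hint2]
  rw [integral_finset_sum _ (fun j _ => (hZint i j).const_mul _)]
  rw [integral_finset_sum _ (fun k _ => integrable_finset_sum _ fun j _ =>
    integrable_finset_sum _ fun a _ => (hintProd k j i a).const_mul _)]
  have e1 : ∀ j, ∫ ω, (lamB i * W j) * (Oᵀ * Binvhalf * A' ω * Binvhalf * O) i j ∂P
      = (lamB i * W j) * (Oᵀ * Binvhalf * A * Binvhalf * O) i j := by
    intro j; rw [integral_const_mul, hZmean]
  have e2 : ∀ k, ∫ ω, (∑ j, ∑ a,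
      ((W k * W j) * (Real.sqrt (lamB i) * ((Real.sqrt (lamB a))⁻¹ * W a)))
        * ((Oᵀ * Binvhalf * A' ω * Binvhalf * O) k j * (Oᵀ * B' ω * O) i a)) ∂P
      = ∑ j, ∑ a, ((W k * W j) * (Real.sqrt (lamB i) * ((Real.sqrt (lamB a))⁻¹ * W a)))
        * ((Oᵀ * Binvhalf * A * Binvhalf * O) k j * (Oᵀ * B * O) i a) := by
    intro k
    rw [integral_finset_sum _ (fun j _ => integrable_finset_sum _ fun a _ =>
      (hintProd k j i a).const_mul _)]
    refine Finset.sum_congr rfl fun j _ => ?_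
    rw [integral_finset_sum _ (fun a _ => (hintProd k j i a).const_mul _)]
    refine Finset.sum_congr rfl fun a _ => ?_
    rw [integral_const_mul, hmeanProd]
  simp only [e1, e2]
  -- back to matrix form, with the mean matrices
  rw [← hlin (Oᵀ * Binvhalf * A * Binvhalf * O),
    ← hbil (Oᵀ * B * O) (Oᵀ * Binvhalf * A * Binvhalf * O)]
  -- deterministic simplification
  have hcancel : ∀ X : Matrix (Fin d) (Fin d) ℝ, Oᵀ * (O * X) = X := fun X => by
    rw [← Matrix.mul_assoc, hO, Matrix.one_mul]
  have hOBO : Oᵀ * B * O = diagonal lamB := by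
    rw [hB]
    simp only [Matrix.mul_assoc, hcancel, hO, Matrix.mul_one]
  have hZbar : Oᵀ * Binvhalf * A * Binvhalf * O = Λm := by
    rw [hBinvhalf, hA, hΛm]
    simp only [Matrix.mul_assoc, hcancel, hO, Matrix.mul_one]
  have hsne : ∀ k, Real.sqrt (lamB k) ≠ 0 := fun k => (Real.sqrt_pos.mpr (hlamB k)).ne'
  have hSBS : S * diagonal lamB * Si = diagonal lamB := by
    rw [hSdef, hSidef, diagonal_mul_diagonal, diagonal_mul_diagonal]
    have : (fun k => Real.sqrt (lamB k) * lamB k * (Real.sqrt (lamB k))⁻¹) = lamB := by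
      funext k
      field_simp [hsne k]
    rw [this]
  rw [hZbar, hOBO, hSBS]
  have h4 : lamB i * ((Λm *ᵥ W) i) = (diagonal lamA *ᵥ W) i := by
    rw [hΛm, hSidef, diagonal_mul_diagonal, diagonal_mul_diagonal, mulVec_diagonal,
      mulVec_diagonal]
    have hs : Real.sqrt (lamB i) * Real.sqrt (lamB i) = lamB i :=
      Real.mul_self_sqrt (hlamB i).le
    have step : lamB i * ((Real.sqrt (lamB i))⁻¹ * lamA i * (Real.sqrt (lamB i))⁻¹ * W i)
        = (Real.sqrt (lamB i) * Real.sqrt (lamB i)) *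
            ((Real.sqrt (lamB i))⁻¹ * lamA i * (Real.sqrt (lamB i))⁻¹ * W i) := by
      rw [hs]
    rw [step]
    field_simp
    rw [mul_assoc]
    exact mul_div_cancel_left₀ _ (hsne i)
  rw [Pi.sub_apply, Pi.smul_apply, smul_eq_mul, h4]
end

section
/- Let d ≥ 1, let μ₁, …, μ_d > 0 and β₁, …, β_d ∈ ℝ, let T ⊆ ℝ be an open interval, and let w : T → ℝ^d be differentiable with w_i'(t) = μ_i (β_i − Σ_{l=1}^d β_l w_l(t)²) w_i(t) for all t ∈ T and all i. Fix indices j ≠ k and suppose w_j(t) > 0 and w_k(t) > 0 for all t ∈ T. Then the function v(t) = w_k(t)^{μ_j} / w_j(t)^{μ_k} satisfies the ODE v'(t) = μ_j μ_k (β_k − β_j) v(t) on T; consequently v(t) = v(t₀) exp(μ_j μ_k (β_k − β_j)(t − t₀)) for all t, t₀ ∈ T. -/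
open Matrix

/-- **ODE for the ratios, Lemma 4.2.** If `w` solves
`w_i' = μ_i (β_i − Σ_l β_l w_l²) w_i` on an open interval `T` and `w_j, w_k > 0` on `T`,
then `v(t) = w_k(t)^{μ_j} / w_j(t)^{μ_k}` satisfies `v' = μ_j μ_k (β_k − β_j) v` on `T`,
hence `v(t) = v(t₀) exp(μ_j μ_k (β_k − β_j)(t − t₀))`. -/
theorem sgha_ode_ratio_dynamics
    (d : ℕ) (hd : 1 ≤ d)
    (μ : Fin d → ℝ) (hμ : ∀ i, 0 < μ i) (β : Fin d → ℝ)
    (T : Set ℝ) (hTopen : IsOpen T) (hTconn : T.OrdConnected)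
    (w : ℝ → Fin d → ℝ)
    (hw : ∀ t ∈ T, ∀ i, HasDerivAt (fun s => w s i)
        (μ i * (β i - ∑ l, β l * (w t l) ^ 2) * w t i) t)
    (j k : Fin d) (hjk : j ≠ k)
    (hwj : ∀ t ∈ T, 0 < w t j) (hwk : ∀ t ∈ T, 0 < w t k)
    (v : ℝ → ℝ)
    (hv : v = fun t => (w t k) ^ (μ j) / (w t j) ^ (μ k)) :
    (∀ t ∈ T, HasDerivAt v (μ j * μ k * (β k - β j) * v t) t) ∧
    (∀ t ∈ T, ∀ t₀ ∈ T,
      v t = v t₀ * Real.exp (μ j * μ k * (β k - β j) * (t - t₀))) := by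
  set c : ℝ := μ j * μ k * (β k - β j) with hc
  have hderiv : ∀ t ∈ T, HasDerivAt v (c * v t) t := by
    intro t ht
    have haj : 0 < w t j := hwj t ht
    have hak : 0 < w t k := hwk t ht
    set S : ℝ := ∑ l, β l * (w t l) ^ 2 with hS
    have hnum : HasDerivAt (fun s => (w s k) ^ (μ j))
        ((μ k * (β k - S) * w t k) * μ j * (w t k) ^ (μ j - 1)) t :=
      (hw t ht k).rpow_const (Or.inl hak.ne')
    have hden : HasDerivAt (fun s => (w s j) ^ (μ k))
        ((μ j * (β j - S) * w t j) * μ k * (w t j) ^ (μ k - 1)) t :=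
      (hw t ht j).rpow_const (Or.inl haj.ne')
    have hden_ne : (w t j) ^ (μ k) ≠ 0 := (Real.rpow_pos_of_pos haj _).ne'
    have hdiv := hnum.div hden hden_ne
    have hveq : HasDerivAt v
        (((μ k * (β k - S) * w t k) * μ j * (w t k) ^ (μ j - 1) * (w t j) ^ (μ k) -
          (w t k) ^ (μ j) * ((μ j * (β j - S) * w t j) * μ k * (w t j) ^ (μ k - 1))) /
          ((w t j) ^ (μ k)) ^ 2) t := by
      rw [hv]; exact hdiv
    convert hveq using 1
    have h1 : (w t k) ^ (μ j - 1) * w t k = (w t k) ^ (μ j) := by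
      rw [← Real.rpow_add_one hak.ne']; ring_nf
    have h2 : (w t j) ^ (μ k - 1) * w t j = (w t j) ^ (μ k) := by
      rw [← Real.rpow_add_one haj.ne']; ring_nf
    have hvt : v t = (w t k) ^ (μ j) / (w t j) ^ (μ k) := by rw [hv]
    have e1 : μ k * (β k - S) * w t k * μ j * w t k ^ (μ j - 1)
        = μ k * (β k - S) * μ j * (w t k ^ μ j) := by rw [← h1]; ring
    have e2 : μ j * (β j - S) * w t j * μ k * w t j ^ (μ k - 1)
        = μ j * (β j - S) * μ k * (w t j ^ μ k) := by rw [← h2]; ring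
    rw [e1, e2, hvt, hc]
    field_simp
    ring
  refine ⟨hderiv, ?_⟩
  intro t ht t₀ ht₀
  -- g s = v s * exp (-c s) is constant on T
  set g : ℝ → ℝ := fun s => v s * Real.exp (-c * s) with hg
  have hg' : ∀ s ∈ T, HasDerivAt g 0 s := by
    intro s hs
    have h1 : HasDerivAt (fun u => Real.exp (-c * u)) (Real.exp (-c * s) * (-c * 1)) s :=
      ((hasDerivAt_id s).const_mul (-c)).exp
    have := (hderiv s hs).mul h1
    exact this.congr_deriv (by ring)
  have hconv : Convex ℝ T := hTconn.convex
  have hgconst : g t = g t₀ := by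
    refine hconv.is_const_of_fderivWithin_eq_zero (𝕜 := ℝ) (f := g) ?_ ?_ ht ht₀
    · intro x hx
      exact ((hg' x hx).differentiableAt).differentiableWithinAt
    · intro x hx
      rw [fderivWithin_of_isOpen hTopen hx]
      have h0 : HasFDerivAt g ((1 : ℝ →L[ℝ] ℝ).smulRight (0 : ℝ)) x :=
        (hg' x hx).hasFDerivAt
      rw [h0.fderiv]
      ext y; simp
  have hE : Real.exp (-c * t) ≠ 0 := Real.exp_ne_zero _
  have h2 : v t₀ * Real.exp (c * (t - t₀)) * Real.exp (-c * t)
      = v t₀ * Real.exp (-c * t₀) := by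
    rw [mul_assoc, ← Real.exp_add]; ring_nf
  exact mul_right_cancel₀ hE ((hgconst : v t * Real.exp (-c * t) = _).trans h2.symm)
end

section
/- Let d ≥ 1, let μ₁, …, μ_d > 0 and β₁ > β₂ ≥ β₃ ≥ ⋯ ≥ β_d > 0, and let w : [0, ∞) → ℝ^d be differentiable with w_i'(t) = μ_i (β_i − Σ_{l=1}^d β_l w_l(t)²) w_i(t) for all t ≥ 0 and all i. If w₁(0) ≠ 0, then as t → ∞, w₁(t)² → 1 and w_i(t) → 0 for every i ≥ 2; that is, the ODE trajectory converges to a global optimum (±e₁) of the generalized eigenvalue problem in the transformed coordinates. -/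
open Set Filter Topology

/-- Barrier lemma: if `g a ≤ C` and the derivative is nonpositive whenever `g ≥ C`,
then `g ≤ C` on `[a, ∞)`. -/
lemma my_barrier {g G : ℝ → ℝ} {a C : ℝ}
    (hcont : ContinuousOn g (Ici a))
    (hderiv : ∀ t ∈ Ioi a, HasDerivAt g (G t) t)
    (hG : ∀ t ∈ Ioi a, C ≤ g t → G t ≤ 0)
    (ha : g a ≤ C) : ∀ t ∈ Ici a, g t ≤ C := by
  intro b hb
  by_contra hgb
  push_neg at hgb
  have hab : a ≤ b := hb
  set A : Set ℝ := {t ∈ Icc a b | g t ≤ C} with hA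
  have hAsub : A ⊆ Icc a b := fun t ht => ht.1
  have hAne : A.Nonempty := ⟨a, ⟨le_refl a, hab⟩, ha⟩
  have hAclosed : IsClosed A := by
    have : A = Icc a b ∩ g ⁻¹' (Iic C) := by
      ext t; simp [hA, Set.mem_sep_iff, Set.mem_inter_iff]
    rw [this]
    exact (hcont.mono Icc_subset_Ici_self).preimage_isClosed_of_isClosed isClosed_Icc isClosed_Iic
  have hAcomp : IsCompact A := isCompact_Icc.of_isClosed_subset hAclosed hAsub
  set m := sSup A with hm
  have hmA : m ∈ A := hAcomp.sSup_mem hAne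
  have hgm : g m ≤ C := hmA.2
  have hmab : m ∈ Icc a b := hmA.1
  have hmb : m < b := lt_of_le_of_ne hmab.2 fun h => absurd (h ▸ hgm) (not_le.2 hgb)
  have hgt : ∀ t ∈ Ioc m b, C ≤ g t := by
    intro t ht
    by_contra h; push_neg at h
    have htA : t ∈ A := ⟨⟨hmab.1.trans ht.1.le, ht.2⟩, h.le⟩
    exact absurd (le_csSup hAcomp.bddAbove htA) (not_le.2 ht.1)
  have anti : AntitoneOn g (Icc m b) := by
    apply antitoneOn_of_deriv_nonpos (convex_Icc m b)
      (hcont.mono (Icc_subset_Ici_self.trans (Ici_subset_Ici.2 hmab.1)))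
    · intro x hx
      rw [interior_Icc] at hx
      exact (hderiv x (lt_of_le_of_lt hmab.1 hx.1)).differentiableAt.differentiableWithinAt
    · intro x hx
      rw [interior_Icc] at hx
      have hax : x ∈ Ioi a := lt_of_le_of_lt hmab.1 hx.1
      rw [(hderiv x hax).deriv]
      exact hG x hax (hgt x ⟨hx.1, hx.2.le⟩)
  have := anti ⟨le_refl m, hmb.le⟩ ⟨hmb.le, le_refl b⟩ hmb.le
  exact absurd (this.trans hgm) (not_le.2 hgb)

/-- Linear decay: derivative ≤ -κ on `(a,b)` forces `g b ≤ g a - κ (b - a)`. -/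
lemma my_decay {g G : ℝ → ℝ} {a b κ : ℝ} (hab : a ≤ b)
    (hcont : ContinuousOn g (Ici a))
    (hderiv : ∀ t ∈ Ioi a, HasDerivAt g (G t) t)
    (hG : ∀ t ∈ Ioo a b, G t ≤ -κ) :
    g b ≤ g a - κ * (b - a) := by
  have anti : AntitoneOn (fun t => g t + κ * t) (Icc a b) := by
    apply antitoneOn_of_deriv_nonpos (convex_Icc a b)
      (((hcont.mono Icc_subset_Ici_self).add (Continuous.continuousOn (by fun_prop))))
    · intro x hx
      rw [interior_Icc] at hx
      exact ((hderiv x hx.1).add ((hasDerivAt_id x).const_mul κ)).differentiableAt.differentiableWithinAt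
    · intro x hx
      rw [interior_Icc] at hx
      have : HasDerivAt (fun t => g t + κ * t) (G x + κ * 1) x :=
        (hderiv x hx.1).add ((hasDerivAt_id x).const_mul κ)
      rw [show deriv (g + HMul.hMul κ) x = G x + κ * 1 from this.deriv]
      have := hG x hx
      linarith
  have := anti ⟨le_refl a, hab⟩ ⟨hab, le_refl b⟩ hab
  simp only at this
  linarith

/-- If `f` solves a linear ODE `f' = c t * f` on `[0,∞)` (with continuous coefficient)
and vanishes at some time `s ≥ 0`, it vanishes at every time `t ≥ 0`. -/
lemma my_zero_propagate {f c : ℝ → ℝ}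
    (hcont : ContinuousOn f (Ici 0))
    (hccont : ContinuousOn c (Ici 0))
    (hderiv : ∀ t ∈ Ici (0:ℝ), HasDerivWithinAt f (c t * f t) (Ici 0) t)
    {s t : ℝ} (hs : 0 ≤ s) (ht : 0 ≤ t) (hfs : f s = 0) : f t = 0 := by
  set b := max s t with hb
  have hb0 : 0 ≤ b := le_trans hs (le_max_left _ _)
  obtain ⟨K, hK⟩ := isCompact_Icc.exists_bound_of_continuousOn
    (hccont.mono (Icc_subset_Ici_self : Icc (0:ℝ) b ⊆ Ici 0))
  have hKx : ∀ x ∈ Icc (0:ℝ) b, |c x| ≤ max K 0 := fun x hx =>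
    le_trans (hK x hx) (le_max_left _ _)
  rcases le_total s t with hst | hst
  · -- forward
    have key := norm_le_gronwallBound_of_norm_deriv_right_le (f := f)
      (f' := fun x => c x * f x) (δ := 0) (K := max K 0) (ε := 0) (a := s) (b := t)
      (hcont.mono (fun x hx => hs.trans hx.1))
      ?_ (by simp [hfs]) ?_ t ⟨hst, le_refl t⟩
    · simpa [gronwallBound_ε0] using key
    · intro x hx
      exact (hderiv x (hs.trans hx.1)).mono (Ici_subset_Ici.mpr (hs.trans hx.1))
    · intro x hx
      have hx0 : (0:ℝ) ≤ x := hs.trans hx.1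
      have hxb : x ≤ b := le_trans hx.2.le (le_max_right _ _)
      calc ‖c x * f x‖ = |c x| * ‖f x‖ := by rw [norm_mul]; rfl
        _ ≤ max K 0 * ‖f x‖ + 0 := by
            have := mul_le_mul_of_nonneg_right (hKx x ⟨hx0, hxb⟩) (norm_nonneg (f x))
            linarith
  · -- backward: consider v x := f (s - x) on [0, s - t]
    set v : ℝ → ℝ := fun x => f (s - x) with hv
    have hst' : 0 ≤ s - t := by linarith
    have hvc : ContinuousOn v (Icc 0 (s - t)) := by
      apply hcont.comp ((continuous_const.sub continuous_id).continuousOn)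
      intro x hx; simp only [mem_Ici]; simp at hx ⊢; linarith [hx.2]
    have key := norm_le_gronwallBound_of_norm_deriv_right_le (f := v)
      (f' := fun x => -(c (s - x) * v x)) (δ := 0) (K := max K 0) (ε := 0) (a := 0) (b := s - t)
      hvc ?_ (by simp [hv, hfs]) ?_ (s - t) ⟨hst', le_refl _⟩
    · have hvt : v (s - t) = f t := by simp [hv]
      rw [hvt] at key
      simpa [gronwallBound_ε0] using key
    · intro x hx
      simp only [mem_Ico] at hx
      have hsx : t ≤ s - x := by linarith [hx.2]
      have hsx0 : 0 ≤ s - x := ht.trans hsx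
      have inner : HasDerivWithinAt (fun y => s - y) (-1 : ℝ) (Icc x (s - t)) x := by
        simpa using ((hasDerivAt_id x).const_sub s).hasDerivWithinAt (s := Icc x (s - t))
      have houter : HasDerivWithinAt f (c (s - x) * f (s - x)) (Ici 0) (s - x) :=
        hderiv (s - x) hsx0
      have maps : MapsTo (fun y => s - y) (Icc x (s - t)) (Ici 0) := by
        intro y hy; simp only [mem_Icc] at hy; simp only [mem_Ici]; linarith [hy.2]
      have comp : HasDerivWithinAt v ((c (s - x) * f (s - x)) * (-1)) (Icc x (s - t)) x :=
        HasDerivWithinAt.comp x houter inner maps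
      have comp' : HasDerivWithinAt v (-(c (s - x) * v x)) (Ici x) x := by
        have hmem : Icc x (s - t) ∈ nhdsWithin x (Ici x) :=
          Icc_mem_nhdsGE_of_mem ⟨le_refl x, hx.2⟩
        have := comp.mono_of_mem_nhdsWithin hmem
        simpa [hv, mul_comm] using this
      exact comp'
    · intro x hx
      simp only [mem_Ico] at hx
      have hsx0 : 0 ≤ s - x := by linarith [hx.2]
      have hsxb : s - x ≤ b := by
        have hsb : s ≤ b := le_max_left _ _
        linarith [hx.1]
      calc ‖-(c (s-x) * v x)‖ = |c (s-x)| * ‖v x‖ := by rw [norm_neg, norm_mul]; rfl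
        _ ≤ max K 0 * ‖v x‖ + 0 := by
            have := mul_le_mul_of_nonneg_right (hKx (s-x) ⟨hsx0, hsxb⟩) (norm_nonneg (v x))
            linarith

set_option maxHeartbeats 1000000 in
/-- Global convergence of the mean-field ODE of SGHA:
if `w` solves `w_i' = μ_i (β_i − Σ_l β_l w_l²) w_i` on `[0, ∞)` with `μ_i > 0`,
`β₁ > β₂ ≥ ⋯ ≥ β_d > 0`, and `w₁(0) ≠ 0`, then `w₁(t)² → 1` and `w_i(t) → 0` for all
`i ≥ 2`: the trajectory converges to a global optimum (`±e₁`) of the generalized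
eigenvalue problem in the transformed coordinates. -/
theorem sgha_ode_global_convergence
    (d : ℕ) (hd : 1 ≤ d)
    (μ : Fin d → ℝ) (hμ : ∀ i, 0 < μ i)
    (β : Fin d → ℝ) (hβpos : ∀ i, 0 < β i)
    (hβtop : ∀ i : Fin d, i ≠ ⟨0, hd⟩ → β i < β ⟨0, hd⟩)
    (hβmono : ∀ i j : Fin d, i ≤ j → β j ≤ β i)
    (w : ℝ → Fin d → ℝ)
    (hw : ∀ t ∈ Set.Ici (0 : ℝ), ∀ i, HasDerivWithinAt (fun s => w s i)
        (μ i * (β i - ∑ l, β l * (w t l) ^ 2) * w t i) (Set.Ici 0) t)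
    (h0 : w 0 ⟨0, hd⟩ ≠ 0) :
    Filter.Tendsto (fun t => (w t ⟨0, hd⟩) ^ 2) Filter.atTop (nhds 1) ∧
    ∀ i : Fin d, i ≠ ⟨0, hd⟩ →
      Filter.Tendsto (fun t => w t i) Filter.atTop (nhds 0) := by
  classical
  set e : Fin d := (⟨0, hd⟩ : Fin d) with he
  set S : ℝ → ℝ := fun t => ∑ l, β l * (w t l)^2 with hSdef
  have h00 : (0:ℝ) ∈ Ici (0:ℝ) := Set.self_mem_Ici
  have hw' : ∀ t ∈ Ici (0:ℝ), ∀ i, HasDerivWithinAt (fun s => w s i)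
      (μ i * (β i - S t) * w t i) (Ici 0) t := hw
  have hcw : ∀ i, ContinuousOn (fun t => w t i) (Ici 0) :=
    fun i t ht => (hw' t ht i).continuousWithinAt
  have hcS : ContinuousOn S (Ici 0) := by
    apply continuousOn_finset_sum
    intro l _
    exact continuousOn_const.mul ((hcw l).pow 2)
  have hDu : ∀ i, ∀ t ∈ Ici (0:ℝ), HasDerivWithinAt (fun s => (w s i)^2)
      (2 * μ i * (β i - S t) * (w t i)^2) (Ici 0) t := by
    intro i t ht
    have h := (hw' t ht i).pow 2
    exact h.congr_deriv (by norm_num; ring)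
  have hzero : ∀ i, ∀ t ∈ Ici (0:ℝ), (w t i = 0 ↔ w 0 i = 0) := by
    intro i t ht
    have hc : ContinuousOn (fun τ => μ i * (β i - S τ)) (Ici 0) :=
      continuousOn_const.mul (continuousOn_const.sub hcS)
    constructor
    · intro h
      exact my_zero_propagate (hcw i) hc (fun τ hτ => hw' τ hτ i) ht h00 h
    · intro h
      exact my_zero_propagate (hcw i) hc (fun τ hτ => hw' τ hτ i) h00 ht h
  have hwe : ∀ t ∈ Ici (0:ℝ), w t e ≠ 0 := fun t ht h => h0 ((hzero e t ht).1 h)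
  set g : ℝ → ℝ := fun t => (w t e)^2 with hgdef
  have hgnn : ∀ t, 0 ≤ g t := fun t => sq_nonneg (w t e)
  have hgpos : ∀ t ∈ Ici (0:ℝ), 0 < g t := fun t ht => pow_two_pos_of_ne_zero (hwe t ht)
  have hgcont : ContinuousOn g (Ici 0) := (hcw e).pow 2
  have hSlb : ∀ t, β e * g t ≤ S t := by
    intro t
    exact Finset.single_le_sum (f := fun l => β l * (w t l)^2)
      (fun l _ => mul_nonneg (hβpos l).le (sq_nonneg _)) (Finset.mem_univ e)
  have hDg : ∀ t ∈ Ioi (0:ℝ), HasDerivAt g (2 * μ e * (β e - S t) * g t) t := by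
    intro t ht
    exact (hDu e t (Set.mem_Ici.2 (le_of_lt ht))).hasDerivAt (Ici_mem_nhds ht)
  set C : ℝ := max (g 0) 1 with hCdef
  have hC1 : (1:ℝ) ≤ C := le_max_right _ _
  have hgC : ∀ t ∈ Ici (0:ℝ), g t ≤ C := by
    apply my_barrier (G := fun t => 2 * μ e * (β e - S t) * g t) hgcont (fun t ht => hDg t ht) ?_ (le_max_left _ _)
    intro t ht hCg
    show 2 * μ e * (β e - S t) * g t ≤ 0
    have hg1 : 1 ≤ g t := le_trans hC1 hCg
    have h1 : β e - S t ≤ 0 := by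
      nlinarith [hSlb t, mul_nonneg (hβpos e).le (by linarith : (0:ℝ) ≤ g t - 1)]
    have h2 : 0 ≤ 2 * μ e * (S t - β e) * g t :=
      mul_nonneg (mul_nonneg (by linarith [hμ e] : (0:ℝ) ≤ 2 * μ e) (by linarith)) (hgnn t)
    nlinarith [h2]
  -- decay of the other coordinates
  have hui : ∀ i : Fin d, i ≠ e → Tendsto (fun t => (w t i)^2) atTop (𝓝 0) := by
    intro i hie
    by_cases h0i : w 0 i = 0
    · have hz : ∀ t ∈ Ici (0:ℝ), (w t i)^2 = 0 := fun t ht => by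
        rw [(hzero i t ht).2 h0i]; ring
      apply Tendsto.congr' _ (tendsto_const_nhds (x := (0:ℝ)))
      filter_upwards [eventually_ge_atTop (0:ℝ)] with t ht
      exact (hz t ht).symm
    · have hwi : ∀ t ∈ Ici (0:ℝ), w t i ≠ 0 := fun t ht h => h0i ((hzero i t ht).1 h)
      set c : ℝ := 2 * μ e * μ i * (β e - β i) with hcdef
      have hcpos : 0 < c :=
        mul_pos (mul_pos (mul_pos two_pos (hμ e)) (hμ i)) (sub_pos.2 (hβtop i hie))
      set L : ℝ → ℝ := fun t => μ e * Real.log ((w t i)^2) - μ i * Real.log (g t) + c * t with hLdef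
      have hLcont : ContinuousOn L (Ici 0) := by
        apply ContinuousOn.add
        apply ContinuousOn.sub
        · exact continuousOn_const.mul (((hcw i).pow 2).log
            (fun τ hτ => pow_ne_zero 2 (hwi τ hτ)))
        · exact continuousOn_const.mul (hgcont.log (fun τ hτ => ne_of_gt (hgpos τ hτ)))
        · exact (continuous_const.mul continuous_id).continuousOn
      have hLconst : ∀ t ∈ Ici (0:ℝ), L t = L 0 := by
        intro t ht
        refine constant_of_has_deriv_right_zero (f := L) (a := 0) (b := t)
          (hLcont.mono Icc_subset_Ici_self) ?_ t ⟨ht, le_refl t⟩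
        intro x hx
        have hx0 : (0:ℝ) ≤ x := hx.1
        have hsub : Ici x ⊆ Ici (0:ℝ) := Ici_subset_Ici.mpr hx0
        have hne1 : (w x i)^2 ≠ 0 := pow_ne_zero 2 (hwi x hx0)
        have hne2 : (w x e)^2 ≠ 0 := pow_ne_zero 2 (hwe x hx0)
        have h1 : HasDerivWithinAt (fun s => Real.log ((w s i)^2))
            ((2 * μ i * (β i - S x) * (w x i)^2) / (w x i)^2) (Ici x) x :=
          ((hDu i x hx0).mono hsub).log hne1
        have h2 : HasDerivWithinAt (fun s => Real.log ((w s e)^2))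
            ((2 * μ e * (β e - S x) * (w x e)^2) / (w x e)^2) (Ici x) x :=
          ((hDu e x hx0).mono hsub).log hne2
        have h3 : HasDerivWithinAt (fun s => c * s) c (Ici x) x := by
          simpa using ((hasDerivAt_id x).const_mul c).hasDerivWithinAt (s := Ici x)
        have h4 := ((h1.const_mul (μ e)).sub (h2.const_mul (μ i))).add h3
        exact h4.congr_deriv (by rw [hcdef, mul_div_cancel_right₀ _ hne1, mul_div_cancel_right₀ _ hne2]; ring)
      have hupos : ∀ t ∈ Ici (0:ℝ), 0 < (w t i)^2 :=
        fun t ht => pow_two_pos_of_ne_zero (hwi t ht)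
      have hdecay : ∀ t ∈ Ici (0:ℝ),
          (w t i)^2 ≤ Real.exp ((L 0 - c * t + μ i * Real.log C) / μ e) := by
        intro t ht
        have hL := hLconst t ht
        have hlog : Real.log (g t) ≤ Real.log C := Real.log_le_log (hgpos t ht) (hgC t ht)
        have h5 : μ e * Real.log ((w t i)^2) ≤ L 0 - c * t + μ i * Real.log C := by
          have h6 : μ i * Real.log (g t) ≤ μ i * Real.log C :=
            mul_le_mul_of_nonneg_left hlog (hμ i).le
          simp only [hLdef] at hL ⊢
          linarith
        have hlogu : Real.log ((w t i)^2) ≤ (L 0 - c * t + μ i * Real.log C) / μ e := by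
          rw [le_div_iff₀ (hμ e), mul_comm]
          exact h5
        calc (w t i)^2 = Real.exp (Real.log ((w t i)^2)) := (Real.exp_log (hupos t ht)).symm
          _ ≤ _ := Real.exp_le_exp.2 hlogu
      have htendsto : Tendsto (fun t => Real.exp ((L 0 - c * t + μ i * Real.log C) / μ e))
          atTop (𝓝 0) := by
        apply Real.tendsto_exp_atBot.comp
        rw [tendsto_atBot]
        intro b
        rw [eventually_atTop]
        refine ⟨(L 0 + μ i * Real.log C - μ e * b) / c, fun x hx => ?_⟩
        rw [div_le_iff₀ (hμ e)]
        rw [div_le_iff₀ hcpos] at hx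
        nlinarith
      apply squeeze_zero' (f := fun t => (w t i)^2)
      · filter_upwards with t; exact sq_nonneg _
      · filter_upwards [eventually_ge_atTop (0:ℝ)] with t ht
        exact hdecay t ht
      · exact htendsto
  have hwi0 : ∀ i, i ≠ e → Tendsto (fun t => w t i) atTop (𝓝 0) := by
    intro i hie
    rw [tendsto_zero_iff_abs_tendsto_zero]
    have h1 : Tendsto (fun t => Real.sqrt ((w t i)^2)) atTop (𝓝 (Real.sqrt 0)) :=
      (Real.continuous_sqrt.tendsto 0).comp (hui i hie)
    rw [Real.sqrt_zero] at h1
    apply h1.congr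
    intro t
    simp [Real.sqrt_sq_eq_abs]
  -- the remainder R and its convergence to 0
  set R : ℝ → ℝ := fun t => ∑ l ∈ Finset.univ.erase e, β l * (w t l)^2 with hRdef
  have hSplit : ∀ t, S t = β e * g t + R t :=
    fun t => (Finset.add_sum_erase _ (fun l => β l * (w t l)^2) (Finset.mem_univ e)).symm
  have hRnn : ∀ t, 0 ≤ R t :=
    fun t => Finset.sum_nonneg fun l _ => mul_nonneg (hβpos l).le (sq_nonneg _)
  have hR0 : Tendsto R atTop (𝓝 0) := by
    have h1 : Tendsto (fun t => ∑ l ∈ Finset.univ.erase e, β l * (w t l)^2) atTop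
        (𝓝 (∑ l ∈ Finset.univ.erase e, (0:ℝ))) := by
      apply tendsto_finset_sum
      intro l hl
      have h2 := (hui l (Finset.ne_of_mem_erase hl)).const_mul (β l)
      simpa using h2
    rw [Finset.sum_const_zero] at h1
    exact h1
  -- the main convergence
  have hmain : Tendsto g atTop (𝓝 1) := by
    rw [Metric.tendsto_atTop]
    intro ε hε
    set δ : ℝ := min (ε/2) (1/2) with hδdef
    have hδpos : 0 < δ := lt_min (by linarith) (by norm_num)
    have hδε : δ < ε := lt_of_le_of_lt (min_le_left _ _) (by linarith)
    have hδhalf : δ ≤ 1/2 := min_le_right _ _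
    have hβe := hβpos e
    have hμe := hμ e
    obtain ⟨T₁, hT₁⟩ := eventually_atTop.1
      (Filter.Tendsto.eventually_lt_const (div_pos (mul_pos hβe hδpos) two_pos) hR0)
    set T : ℝ := max T₁ 0 with hTdef
    have hT0 : (0:ℝ) ≤ T := le_max_right _ _
    have hT : ∀ t, T ≤ t → R t < β e * δ / 2 :=
      fun t ht => hT₁ t (le_trans (le_max_left _ _) ht)
    -- E1 : at some time after T, g drops below 1 + δ/2
    have hE1 : ∃ t₀, T ≤ t₀ ∧ g t₀ ≤ 1 + δ/2 := by
      by_contra hcon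
      push_neg at hcon
      obtain ⟨κ, hκdef⟩ : ∃ κ : ℝ, κ = 2 * μ e * (β e * (δ/2)) := ⟨_, rfl⟩
      have hκpos : 0 < κ := by
        rw [hκdef]
        exact mul_pos (mul_pos two_pos hμe) (mul_pos hβe (by linarith))
      obtain ⟨b, hbdef⟩ : ∃ b : ℝ, b = T + (g T)/κ + 1 := ⟨_, rfl⟩
      have hTb : T ≤ b := by
        have h1 : 0 ≤ g T / κ := div_nonneg (hgnn T) hκpos.le
        rw [hbdef]
        linarith
      have hdec := my_decay (G := fun t => 2 * μ e * (β e - S t) * g t) (κ := κ) hTb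
        (hgcont.mono (Ici_subset_Ici.mpr hT0))
        (fun t ht => hDg t (lt_of_le_of_lt hT0 ht)) ?_
      · have hgb0 : 0 ≤ g b := hgnn b
        have hb' : κ * (b - T) = g T + κ := by
          have hbt : b - T = g T / κ + 1 := by rw [hbdef]; ring
          rw [hbt]
          field_simp
        rw [hb'] at hdec
        linarith
      · intro t ht
        obtain ⟨ht1, ht2⟩ := ht
        show 2 * μ e * (β e - S t) * g t ≤ -κ
        have hgt := hcon t ht1.le
        have hg1 : 1 ≤ g t := by linarith
        have h1 : β e - S t ≤ - (β e * (δ/2)) := by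
          nlinarith [hSlb t, mul_nonneg hβe.le (by linarith : (0:ℝ) ≤ g t - 1 - δ/2)]
        have hX : 2 * μ e * (β e - S t) ≤ -κ := by
          nlinarith [mul_le_mul_of_nonneg_left h1 (by linarith : (0:ℝ) ≤ 2 * μ e), hκdef]
        have hXg : 2 * μ e * (β e - S t) * g t ≤ -κ * g t :=
          mul_le_mul_of_nonneg_right hX (hgnn t)
        have hk1 : -κ * g t ≤ -κ := by
          nlinarith [mul_nonneg hκpos.le (by linarith : (0:ℝ) ≤ g t - 1)]
        linarith
    obtain ⟨t₀, ht₀T, hgt₀⟩ := hE1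
    have ht₀0 : (0:ℝ) ≤ t₀ := le_trans hT0 ht₀T
    -- E2 : g stays below 1 + δ after t₀
    have hupper : ∀ t ∈ Ici t₀, g t ≤ 1 + δ := by
      apply my_barrier (G := fun t => 2 * μ e * (β e - S t) * g t)
        (hgcont.mono (Ici_subset_Ici.mpr ht₀0))
        (fun t ht => hDg t (lt_of_le_of_lt ht₀0 ht)) ?_ (by linarith)
      intro t ht hge
      show 2 * μ e * (β e - S t) * g t ≤ 0
      have hg1 : 1 ≤ g t := by linarith
      have h1 : β e - S t ≤ 0 := by
        nlinarith [hSlb t, mul_nonneg hβe.le (by linarith : (0:ℝ) ≤ g t - 1)]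
      have h2 : 0 ≤ 2 * μ e * (S t - β e) * g t :=
        mul_nonneg (mul_nonneg (by linarith : (0:ℝ) ≤ 2 * μ e) (by linarith)) (hgnn t)
      nlinarith [h2]
    have hlogC : ∀ t ∈ Ici (0:ℝ), Real.log (g t) ≤ Real.log C :=
      fun t ht => Real.log_le_log (hgpos t ht) (hgC t ht)
    -- E3 : at some time after t₀, g rises above 1 - δ
    have hE3 : ∃ t₁, t₀ ≤ t₁ ∧ 1 - δ ≤ g t₁ := by
      by_contra hcon
      push_neg at hcon
      obtain ⟨κ, hκdef⟩ : ∃ κ : ℝ, κ = μ e * β e * δ := ⟨_, rfl⟩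
      have hκpos : 0 < κ := by rw [hκdef]; exact mul_pos (mul_pos hμe hβe) hδpos
      set φ : ℝ → ℝ := fun t => - Real.log (g t) with hφdef
      have hDφ : ∀ t ∈ Ioi t₀, HasDerivAt φ
          (-((2 * μ e * (β e - S t) * g t) / g t)) t := by
        intro t ht
        have hgt0 : (0:ℝ) < t := lt_of_le_of_lt ht₀0 ht
        exact ((hDg t hgt0).log (ne_of_gt (hgpos t hgt0.le))).neg
      obtain ⟨b, hbdef⟩ : ∃ b : ℝ, b = t₀ + (Real.log C - Real.log (g t₀))/κ + 1 := ⟨_, rfl⟩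
      have hlt₀ : Real.log (g t₀) ≤ Real.log C := hlogC t₀ ht₀0
      have hb : t₀ ≤ b := by
        have h1 : 0 ≤ (Real.log C - Real.log (g t₀))/κ := div_nonneg (by linarith) hκpos.le
        rw [hbdef]
        linarith
      have hφcont : ContinuousOn φ (Ici t₀) := by
        apply ContinuousOn.neg
        exact (hgcont.mono (Ici_subset_Ici.mpr ht₀0)).log
          (fun τ hτ => ne_of_gt (hgpos τ (le_trans ht₀0 hτ)))
      have hdec := my_decay (κ := κ) hb hφcont hDφ ?_
      · have h2 : Real.log (g b) ≤ Real.log C := hlogC b (le_trans ht₀0 hb)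
        have h3 : κ * (b - t₀) = (Real.log C - Real.log (g t₀)) + κ := by
          have hbt : b - t₀ = (Real.log C - Real.log (g t₀))/κ + 1 := by rw [hbdef]; ring
          rw [hbt]
          field_simp
        simp only [hφdef] at hdec
        rw [h3] at hdec
        linarith
      · intro t ht
        obtain ⟨ht1, ht2⟩ := ht
        show -(2 * μ e * (β e - S t) * g t / g t) ≤ -κ
        have hgt0 : (0:ℝ) < t := lt_of_le_of_lt ht₀0 ht1
        have hgtpos := hgpos t hgt0.le
        have hRt : R t < β e * δ / 2 := hT t (le_trans ht₀T ht1.le)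
        have hglt : g t < 1 - δ := hcon t ht1.le
        have hSeq := hSplit t
        have h4 : β e * δ / 2 ≤ β e - S t := by
          nlinarith [mul_nonneg hβe.le (by linarith : (0:ℝ) ≤ 1 - δ - g t)]
        have h5 : (2 * μ e * (β e - S t) * g t) / g t = 2 * μ e * (β e - S t) := by
          field_simp
        rw [h5]
        nlinarith [mul_le_mul_of_nonneg_left h4 (by linarith : (0:ℝ) ≤ 2 * μ e), hκdef]

    obtain ⟨t₁, ht₁t₀, hgt₁⟩ := hE3
    have ht₁0 : (0:ℝ) ≤ t₁ := le_trans ht₀0 ht₁t₀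
    -- E4 : g stays above 1 - δ after t₁
    have hlower : ∀ t ∈ Ici t₁, 1 - δ ≤ g t := by
      have hneg : ∀ t ∈ Ici t₁, (fun t => - g t) t ≤ -(1-δ) := by
        apply my_barrier (g := fun t => - g t)
          (G := fun t => -(2 * μ e * (β e - S t) * g t))
          ((hgcont.mono (Ici_subset_Ici.mpr ht₁0)).neg)
          (fun t ht => (hDg t (lt_of_le_of_lt ht₁0 ht)).neg)
          ?_ (by show -g t₁ ≤ -(1-δ); linarith)
        intro t ht hge
        show -(2 * μ e * (β e - S t) * g t) ≤ 0
        have hgt0 : (0:ℝ) < t := lt_of_le_of_lt ht₁0 ht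
        have hle : g t ≤ 1 - δ := by
          have h8 : -(1-δ) ≤ -g t := hge
          linarith
        have hRt : R t < β e * δ / 2 := hT t (le_trans (le_trans ht₀T ht₁t₀) (le_of_lt ht))
        have hSeq := hSplit t
        have h4 : 0 ≤ β e - S t := by
          nlinarith [mul_nonneg hβe.le (by linarith : (0:ℝ) ≤ 1 - δ - g t)]
        have h2 : 0 ≤ 2 * μ e * (β e - S t) * g t :=
          mul_nonneg (mul_nonneg (by linarith : (0:ℝ) ≤ 2 * μ e) h4) (hgnn t)
        linarith
      intro t ht
      have h9 : -g t ≤ -(1-δ) := hneg t ht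
      linarith
    refine ⟨t₁, fun t hts => ?_⟩
    have h1 := hupper t (le_trans ht₁t₀ hts)
    have h2 := hlower t hts
    rw [Real.dist_eq]
    rw [abs_lt]
    constructor <;> linarith
  exact ⟨hmain, hwi0⟩
end
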